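/- Let M > 0 and A ≠ 0 be real constants (A the Kerr rotation parameter). Consider the Kerr metric in Boyer–Lindquist coordinates (t,r,θ,φ), with ρ² = r² + A² cos²θ, Σ = r² + A² − 2Mr, and nonzero components g_{tt} = 1 − 2Mr/ρ², g_{rr} = −ρ²/Σ, g_{θθ} = −ρ², g_{tφ} = g_{φt} = 2MrA sin²θ/ρ², g_{φφ} = −[(r² + A²) sin²θ + 2MrA² sin⁴θ/ρ²], on an open set W ⊆ ℝ⁴ of coordinate values on which ρ² ≠ 0, Σ ≠ 0 and g_{φφ} > 0. Define the vector field v^μ = (0, 0, 0, (g_{φφ})^{−1/2}) on W. Then: (i) Σ_{μ,ν} g_{μν} v^μ v^ν = 1; (ii) the acceleration a_μ = Σ_ν v^ν (∂_ν v_μ − Σ_ε Γ^ε_{μν} v_ε) equals the gradient a_μ = ∂_μ Ψ with Ψ = −(1/2) ln(g_{φφ}); and (iii) at points of W with θ = π/2 one has g_{φφ} = −(r² + A² + 2MA²/r), Ψ = −(1/2) ln(−(r² + A² + 2MA²/r)), and a_μ = (0, −(r³ − MA²)/(r⁴ + r²A² + 2MrA²), 0, 0). -/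

import Mathlib

open scoped BigOperators

set_option maxHeartbeats 1000000

/-- Partial derivative with respect to the μ-th coordinate of ℝ⁴. -/
noncomputable def pd (μ : Fin 4) (f : (Fin 4 → ℝ) → ℝ) (x : Fin 4 → ℝ) : ℝ :=
  fderiv ℝ f x (Pi.single μ 1)

/-- Christoffel symbols `Γ^ε_{μν}` of a metric field `g`. -/
noncomputable def christoffel (g : (Fin 4 → ℝ) → Matrix (Fin 4) (Fin 4) ℝ)
    (ε μ ν : Fin 4) (x : Fin 4 → ℝ) : ℝ :=
  (1 / 2) * ∑ α, (g x)⁻¹ ε α *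
    (pd ν (fun y => g y α μ) x + pd μ (fun y => g y α ν) x - pd α (fun y => g y μ ν) x)

/-- Covariant components `v_μ = g_{μν} v^ν` of a vector field. -/
noncomputable def vlow (g : (Fin 4 → ℝ) → Matrix (Fin 4) (Fin 4) ℝ)
    (v : (Fin 4 → ℝ) → Fin 4 → ℝ) (μ : Fin 4) (x : Fin 4 → ℝ) : ℝ :=
  ∑ ν, g x μ ν * v x ν

/-- Acceleration covector `a_μ = v^ν (∂_ν v_μ − Γ^ε_{μν} v_ε)` of a vector field. -/
noncomputable def accel (g : (Fin 4 → ℝ) → Matrix (Fin 4) (Fin 4) ℝ)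
    (v : (Fin 4 → ℝ) → Fin 4 → ℝ) (μ : Fin 4) (x : Fin 4 → ℝ) : ℝ :=
  ∑ ν, v x ν * (pd ν (vlow g v μ) x - ∑ ε, christoffel g ε μ ν x * vlow g v ε x)

/-- `ρ² = r² + A² cos²θ` in Boyer–Lindquist coordinates (t, r, θ, φ) = (x⁰, x¹, x², x³). -/
noncomputable def ρ2 (A : ℝ) (x : Fin 4 → ℝ) : ℝ :=
  (x 1) ^ 2 + A ^ 2 * Real.cos (x 2) ^ 2

/-- `Σ = r² + A² − 2Mr`. -/
noncomputable def SigK (M A : ℝ) (x : Fin 4 → ℝ) : ℝ :=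
  (x 1) ^ 2 + A ^ 2 - 2 * M * x 1

/-- The Kerr metric in Boyer–Lindquist coordinates (t, r, θ, φ) = (x⁰, x¹, x², x³). -/
noncomputable def gKerr (M A : ℝ) (x : Fin 4 → ℝ) : Matrix (Fin 4) (Fin 4) ℝ :=
  !![1 - 2 * M * x 1 / ρ2 A x, 0, 0, 2 * M * x 1 * A * Real.sin (x 2) ^ 2 / ρ2 A x;
     0, -(ρ2 A x) / SigK M A x, 0, 0;
     0, 0, -(ρ2 A x), 0;
     2 * M * x 1 * A * Real.sin (x 2) ^ 2 / ρ2 A x, 0, 0,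
       -(((x 1) ^ 2 + A ^ 2) * Real.sin (x 2) ^ 2
           + 2 * M * x 1 * A ^ 2 * Real.sin (x 2) ^ 4 / ρ2 A x)]

/-- The circular observer `v^μ = (0, 0, 0, (g_{φφ})^{−1/2})` in the region `g_{φφ} > 0`. -/
noncomputable def vKerr (M A : ℝ) (x : Fin 4 → ℝ) : Fin 4 → ℝ :=
  ![0, 0, 0, (Real.sqrt (gKerr M A x 3 3))⁻¹]

private lemma kerr_inv4 (a b c e d : ℝ) (hc : c ≠ 0) (he : e ≠ 0) (hD : a * d - b ^ 2 ≠ 0) :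
    (!![a,0,0,b; 0,c,0,0; 0,0,e,0; b,0,0,d] : Matrix (Fin 4) (Fin 4) ℝ)⁻¹ =
    !![d/(a*d-b^2),0,0,-b/(a*d-b^2); 0,c⁻¹,0,0; 0,0,e⁻¹,0;
       -b/(a*d-b^2),0,0,a/(a*d-b^2)] := by
  apply Matrix.inv_eq_right_inv
  ext i j
  fin_cases i <;> fin_cases j <;>
    simp [Matrix.mul_apply, Fin.sum_univ_four, Matrix.one_apply, Matrix.vecHead,
      Matrix.vecTail] <;>
    field_simp <;> ring

/-- In the region of closed time-like curves of Kerr space-time (`g_{φφ} > 0`), the circular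
observer is unit-normalized, its acceleration is the gradient of `Ψ = −(1/2)ln g_{φφ}`, and
on the equatorial plane `θ = π/2` it takes the stated explicit form. -/
theorem kerr_circular_observer_acceleration (M A : ℝ) (hM : 0 < M) (hA : A ≠ 0)
    (W : Set (Fin 4 → ℝ)) (hW : IsOpen W)
    (hρ : ∀ x ∈ W, ρ2 A x ≠ 0) (hSig : ∀ x ∈ W, SigK M A x ≠ 0)
    (hφφ : ∀ x ∈ W, 0 < gKerr M A x 3 3) :
    ∀ x ∈ W,
      (∑ μ, ∑ ν, gKerr M A x μ ν * vKerr M A x μ * vKerr M A x ν = 1) ∧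
      (∀ μ : Fin 4, accel (gKerr M A) (vKerr M A) μ x
          = pd μ (fun y => -(1 / 2) * Real.log (gKerr M A y 3 3)) x) ∧
      (x 2 = Real.pi / 2 →
        gKerr M A x 3 3 = -((x 1) ^ 2 + A ^ 2 + 2 * M * A ^ 2 / x 1) ∧
        -(1 / 2) * Real.log (gKerr M A x 3 3)
          = -(1 / 2) * Real.log (-((x 1) ^ 2 + A ^ 2 + 2 * M * A ^ 2 / x 1)) ∧
        (∀ μ : Fin 4, accel (gKerr M A) (vKerr M A) μ x
            = ![0, -((x 1) ^ 3 - M * A ^ 2) /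
                  ((x 1) ^ 4 + (x 1) ^ 2 * A ^ 2 + 2 * M * x 1 * A ^ 2), 0, 0] μ)) := by

  intro x hx
  have hP := hρ x hx
  have hS := hSig x hx
  have hg := hφφ x hx
  have hg' : gKerr M A x 3 3 ≠ 0 := ne_of_gt hg
  have hsq : Real.sqrt (gKerr M A x 3 3) ≠ 0 := by positivity
  have hs : Real.sin (x 2) ≠ 0 := by
    intro h
    rw [show gKerr M A x 3 3 = -(((x 1) ^ 2 + A ^ 2) * Real.sin (x 2) ^ 2
         + 2 * M * x 1 * A ^ 2 * Real.sin (x 2) ^ 4 / ρ2 A x) by simp [gKerr], h] at hg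
    simp at hg
  -- block determinant
  have hDeq : gKerr M A x 0 0 * gKerr M A x 3 3 - gKerr M A x 0 3 ^ 2
      = -SigK M A x * Real.sin (x 2) ^ 2 := by
    have hc : Real.cos (x 2) ^ 2 = 1 - Real.sin (x 2) ^ 2 := Real.cos_sq' (x 2)
    have hP' := hP
    simp only [gKerr, Matrix.cons_val_zero, Matrix.cons_val_three, Matrix.cons_val_one,
      Matrix.head_cons, Matrix.cons_val', Matrix.empty_val', Matrix.cons_val_fin_one,
      Matrix.of_apply, Matrix.tail_cons, Matrix.vecHead]
    rw [ρ2] at hP' ⊢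
    rw [SigK]
    rw [hc] at hP' ⊢
    field_simp
    ring
  have hD : gKerr M A x 0 0 * gKerr M A x 3 3 - gKerr M A x 0 3 ^ 2 ≠ 0 := by
    rw [hDeq]
    exact mul_ne_zero (neg_ne_zero.mpr hS) (pow_ne_zero 2 hs)
  -- the metric as an explicit 4×4 matrix of its entries, and its inverse
  have hM4 : gKerr M A x = !![gKerr M A x 0 0, 0, 0, gKerr M A x 0 3;
      0, -(ρ2 A x) / SigK M A x, 0, 0; 0, 0, -(ρ2 A x), 0;
      gKerr M A x 0 3, 0, 0, gKerr M A x 3 3] := by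
    ext i j
    fin_cases i <;> fin_cases j <;>
      simp [gKerr, Matrix.vecHead, Matrix.vecTail]
  have hinv : (gKerr M A x)⁻¹ = !![gKerr M A x 3 3 /
        (gKerr M A x 0 0 * gKerr M A x 3 3 - gKerr M A x 0 3 ^ 2), 0, 0,
      -gKerr M A x 0 3 / (gKerr M A x 0 0 * gKerr M A x 3 3 - gKerr M A x 0 3 ^ 2);
      0, (-(ρ2 A x) / SigK M A x)⁻¹, 0, 0; 0, 0, (-(ρ2 A x))⁻¹, 0;
      -gKerr M A x 0 3 / (gKerr M A x 0 0 * gKerr M A x 3 3 - gKerr M A x 0 3 ^ 2), 0, 0,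
      gKerr M A x 0 0 / (gKerr M A x 0 0 * gKerr M A x 3 3 - gKerr M A x 0 3 ^ 2)] := by
    conv_lhs => rw [hM4]
    exact kerr_inv4 _ _ _ _ _ (div_ne_zero (neg_ne_zero.mpr hP) hS) (neg_ne_zero.mpr hP) hD
  -- explicit forms of the relevant metric coefficient functions
  have hfun33 : (fun y => gKerr M A y 3 3)
      = (fun y : Fin 4 → ℝ => -(((y 1) ^ 2 + A ^ 2) * Real.sin (y 2) ^ 2
          + 2 * M * y 1 * A ^ 2 * Real.sin (y 2) ^ 4
            * ((y 1) ^ 2 + A ^ 2 * Real.cos (y 2) ^ 2)⁻¹)) := by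
    funext y
    simp [gKerr, ρ2, div_eq_mul_inv]
  have hfun03 : (fun y => gKerr M A y 0 3)
      = (fun y : Fin 4 → ℝ => 2 * M * y 1 * A * Real.sin (y 2) ^ 2
          * ((y 1) ^ 2 + A ^ 2 * Real.cos (y 2) ^ 2)⁻¹) := by
    funext y
    simp [gKerr, ρ2, div_eq_mul_inv]
  -- building blocks for derivatives
  have h1 : HasFDerivAt (𝕜 := ℝ) (fun y : Fin 4 → ℝ => y 1)
      (ContinuousLinearMap.proj 1 : (Fin 4 → ℝ) →L[ℝ] ℝ) x :=
    (ContinuousLinearMap.proj 1 : (Fin 4 → ℝ) →L[ℝ] ℝ).hasFDerivAt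
  have h2 : HasFDerivAt (𝕜 := ℝ) (fun y : Fin 4 → ℝ => y 2)
      (ContinuousLinearMap.proj 2 : (Fin 4 → ℝ) →L[ℝ] ℝ) x :=
    (ContinuousLinearMap.proj 2 : (Fin 4 → ℝ) →L[ℝ] ℝ).hasFDerivAt
  have hsin : HasFDerivAt (𝕜 := ℝ) (fun y : Fin 4 → ℝ => Real.sin (y 2)) _ x :=
    (Real.hasDerivAt_sin (x 2)).comp_hasFDerivAt (𝕜 := ℝ) (h₂ := Real.sin) x h2
  have hcos : HasFDerivAt (𝕜 := ℝ) (fun y : Fin 4 → ℝ => Real.cos (y 2)) _ x :=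
    (Real.hasDerivAt_cos (x 2)).comp_hasFDerivAt (𝕜 := ℝ) (h₂ := Real.cos) x h2
  have hr2 : HasFDerivAt (𝕜 := ℝ) (fun y : Fin 4 → ℝ => (y 1) ^ 2) _ x :=
    (hasDerivAt_pow 2 (x 1)).comp_hasFDerivAt (𝕜 := ℝ) (h₂ := fun t : ℝ => t ^ 2) x h1
  have hsin2 : HasFDerivAt (𝕜 := ℝ) (fun y : Fin 4 → ℝ => Real.sin (y 2) ^ 2) _ x :=
    (hasDerivAt_pow 2 (Real.sin (x 2))).comp_hasFDerivAt (𝕜 := ℝ) (h₂ := fun t : ℝ => t ^ 2) x hsin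
  have hsin4 : HasFDerivAt (𝕜 := ℝ) (fun y : Fin 4 → ℝ => Real.sin (y 2) ^ 4) _ x :=
    (hasDerivAt_pow 4 (Real.sin (x 2))).comp_hasFDerivAt (𝕜 := ℝ) (h₂ := fun t : ℝ => t ^ 4) x hsin
  have hcos2 : HasFDerivAt (𝕜 := ℝ) (fun y : Fin 4 → ℝ => Real.cos (y 2) ^ 2) _ x :=
    (hasDerivAt_pow 2 (Real.cos (x 2))).comp_hasFDerivAt (𝕜 := ℝ) (h₂ := fun t : ℝ => t ^ 2) x hcos
  have hPd : HasFDerivAt (𝕜 := ℝ)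
      (fun y : Fin 4 → ℝ => (y 1) ^ 2 + A ^ 2 * Real.cos (y 2) ^ 2) _ x :=
    hr2.add (hcos2.const_mul (A ^ 2))
  have hPinv : HasFDerivAt (𝕜 := ℝ)
      (fun y : Fin 4 → ℝ => ((y 1) ^ 2 + A ^ 2 * Real.cos (y 2) ^ 2)⁻¹) _ x :=
    (hasDerivAt_inv (by simpa [ρ2] using hP)).comp_hasFDerivAt (𝕜 := ℝ) (h₂ := fun t : ℝ => t⁻¹) x hPd
  -- the derivative of g₃₃
  obtain ⟨D33, hG33, hD33_0, hD33_3, hD33_eq⟩ :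
      ∃ D : (Fin 4 → ℝ) →L[ℝ] ℝ,
        HasFDerivAt (fun y => gKerr M A y 3 3) D x ∧
        D (Pi.single 0 1) = 0 ∧ D (Pi.single 3 1) = 0 ∧
        (x 2 = Real.pi / 2 →
          D (Pi.single 1 1) = -(2 * x 1 - 2 * M * A ^ 2 / (x 1) ^ 2) ∧
          D (Pi.single 2 1) = 0) := by
    rw [hfun33]
    refine ⟨_, (((hr2.add_const (A ^ 2)).mul hsin2).add
      ((((h1.const_mul (2 * M)).mul_const (A ^ 2)).mul hsin4).mul hPinv)).neg, ?_, ?_, ?_⟩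
    · simp [Pi.single_apply]
    · simp [Pi.single_apply]
    · intro hx2
      have hr1 : x 1 ≠ 0 := by
        intro h
        exact hP (by simp [ρ2, hx2, h])
      constructor
      · simp [Pi.single_apply, hx2]
        field_simp
        ring
      · simp [Pi.single_apply, hx2]
  -- the derivative of g₀₃
  obtain ⟨D03, hG03, hD03_3⟩ :
      ∃ D : (Fin 4 → ℝ) →L[ℝ] ℝ,
        HasFDerivAt (fun y => gKerr M A y 0 3) D x ∧ D (Pi.single 3 1) = 0 := by
    rw [hfun03]
    refine ⟨_, (((h1.const_mul (2 * M)).mul_const A).mul hsin2).mul hPinv, ?_⟩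
    simp [Pi.single_apply]
  -- derivative of (√g₃₃)⁻¹
  have hsqrtinv := (hasDerivAt_inv hsq).comp_hasFDerivAt (𝕜 := ℝ) x
    ((Real.hasDerivAt_sqrt hg').comp_hasFDerivAt (𝕜 := ℝ) x hG33)
  -- derivatives of the nonzero covariant components
  obtain ⟨E0, hE0, hE0_3⟩ :
      ∃ E : (Fin 4 → ℝ) →L[ℝ] ℝ,
        HasFDerivAt (fun y => gKerr M A y 0 3 * (Real.sqrt (gKerr M A y 3 3))⁻¹) E x ∧
        E (Pi.single 3 1) = 0 := by
    refine ⟨_, hG03.mul hsqrtinv, ?_⟩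
    simp [Pi.single_apply, hD33_3, hD03_3]
  obtain ⟨E3, hE3, hE3_3⟩ :
      ∃ E : (Fin 4 → ℝ) →L[ℝ] ℝ,
        HasFDerivAt (fun y => gKerr M A y 3 3 * (Real.sqrt (gKerr M A y 3 3))⁻¹) E x ∧
        E (Pi.single 3 1) = 0 := by
    refine ⟨_, hG33.mul hsqrtinv, ?_⟩
    simp [Pi.single_apply, hD33_3]
  -- the covariant components as functions
  have hvl0 : vlow (gKerr M A) (vKerr M A) 0
      = fun y => gKerr M A y 0 3 * (Real.sqrt (gKerr M A y 3 3))⁻¹ := by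
    funext y
    simp [vlow, vKerr, Fin.sum_univ_four]
  have hvl1 : vlow (gKerr M A) (vKerr M A) 1 = fun _ => (0 : ℝ) := by
    funext y
    simp [vlow, vKerr, gKerr, Fin.sum_univ_four]
  have hvl2 : vlow (gKerr M A) (vKerr M A) 2 = fun _ => (0 : ℝ) := by
    funext y
    simp [vlow, vKerr, gKerr, Fin.sum_univ_four]
  have hvl3 : vlow (gKerr M A) (vKerr M A) 3
      = fun y => gKerr M A y 3 3 * (Real.sqrt (gKerr M A y 3 3))⁻¹ := by
    funext y
    simp [vlow, vKerr, Fin.sum_univ_four]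
  -- φ-derivatives of the covariant components vanish
  have hpdvl : ∀ μ : Fin 4, pd 3 (vlow (gKerr M A) (vKerr M A) μ) x = 0 := by
    intro μ
    fin_cases μ
    · show pd 3 (vlow (gKerr M A) (vKerr M A) 0) x = 0
      rw [hvl0, pd, hE0.fderiv, hE0_3]
    · show pd 3 (vlow (gKerr M A) (vKerr M A) 1) x = 0
      rw [hvl1]
      simp [pd]
    · show pd 3 (vlow (gKerr M A) (vKerr M A) 2) x = 0
      rw [hvl2]
      simp [pd]
    · show pd 3 (vlow (gKerr M A) (vKerr M A) 3) x = 0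
      rw [hvl3, pd, hE3.fderiv, hE3_3]
  have hpdD : ∀ μ : Fin 4, pd μ (fun y => gKerr M A y 3 3) x = D33 (Pi.single μ 1) := by
    intro μ
    rw [pd, hG33.fderiv]
  -- symmetry of the metric coefficients as functions
  have hsymm : ∀ α μ : Fin 4, (fun y => gKerr M A y α μ) = (fun y => gKerr M A y μ α) := by
    intro α μ
    funext y
    fin_cases α <;> fin_cases μ <;> simp [gKerr, Matrix.vecHead, Matrix.vecTail]
  -- the main computation: the acceleration
  have hAcc : ∀ μ : Fin 4, accel (gKerr M A) (vKerr M A) μ x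
      = -(1 / 2) * (gKerr M A x 3 3)⁻¹ * D33 (Pi.single μ 1) := by
    intro μ
    simp only [accel, christoffel, Fin.sum_univ_four, hinv]
    rw [hpdvl μ, hsymm 3 μ, ← hpdD μ]
    simp [hvl0, hvl1, hvl2, hvl3, vKerr, Matrix.vecHead, Matrix.vecTail]
    generalize hu : Real.sqrt (gKerr M A x 3 3) = u
    have hu' : u ≠ 0 := hu ▸ hsq
    have hu2 : u * u = gKerr M A x 3 3 := by rw [← hu]; exact Real.mul_self_sqrt hg.le
    rw [← hu2] at hD ⊢
    field_simp
    have hD2 : u ^ 2 * gKerr M A x 0 0 - gKerr M A x 0 3 ^ 2 ≠ 0 := by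
      convert hD using 1; ring
    field_simp
    ring
  refine ⟨?_, ?_, ?_⟩
  · -- unit normalization
    rw [Fin.sum_univ_four]
    simp only [Fin.sum_univ_four, vKerr, Matrix.cons_val_zero, Matrix.cons_val_one,
      Matrix.head_cons, Matrix.cons_val_two, Matrix.tail_cons, Matrix.cons_val_three]
    rw [show gKerr M A x 3 3 = Real.sqrt (gKerr M A x 3 3) * Real.sqrt (gKerr M A x 3 3) from
      (Real.mul_self_sqrt hg.le).symm]
    field_simp
    simp [Real.sq_sqrt, Real.sqrt_nonneg, hg.le]
  · -- the acceleration is the gradient of Ψ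
    intro μ
    rw [hAcc μ]
    obtain ⟨L, hL, hLval⟩ :
        ∃ L : (Fin 4 → ℝ) →L[ℝ] ℝ,
          HasFDerivAt (fun y => -(1 / 2) * Real.log (gKerr M A y 3 3)) L x ∧
          L (Pi.single μ 1) = -(1 / 2) * (gKerr M A x 3 3)⁻¹ * D33 (Pi.single μ 1) := by
      refine ⟨_, ((Real.hasDerivAt_log hg').comp_hasFDerivAt (𝕜 := ℝ) (h₂ := Real.log) x hG33).const_mul
        (-(1 / 2)), ?_⟩
      simp [mul_assoc]
    rw [pd, hL.fderiv, hLval]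
  · -- explicit form on the equatorial plane
    intro hx2
    have hr1 : x 1 ≠ 0 := by
      intro h
      exact hP (by simp [ρ2, hx2, h])
    have hval : gKerr M A x 3 3 = -((x 1) ^ 2 + A ^ 2 + 2 * M * A ^ 2 / x 1) := by
      simp [gKerr, ρ2, hx2]
      field_simp
    refine ⟨hval, by rw [hval], ?_⟩
    intro μ
    have hgne : (x 1) ^ 2 + A ^ 2 + 2 * M * A ^ 2 / x 1 ≠ 0 := by
      intro h
      exact hg' (by rw [hval, h, neg_zero])
    have hden : (x 1) ^ 4 + (x 1) ^ 2 * A ^ 2 + 2 * M * x 1 * A ^ 2 ≠ 0 := by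
      have heq : (x 1) ^ 4 + (x 1) ^ 2 * A ^ 2 + 2 * M * x 1 * A ^ 2
          = (x 1) ^ 2 * ((x 1) ^ 2 + A ^ 2 + 2 * M * A ^ 2 / x 1) := by
        field_simp
      rw [heq]
      exact mul_ne_zero (pow_ne_zero 2 hr1) hgne
    obtain ⟨hd1, hd2⟩ := hD33_eq hx2
    rw [hAcc μ]
    fin_cases μ
    · show -(1 / 2) * (gKerr M A x 3 3)⁻¹ * D33 (Pi.single 0 1) = (0 : ℝ)
      rw [hD33_0]
      simp
    · show -(1 / 2) * (gKerr M A x 3 3)⁻¹ * D33 (Pi.single 1 1)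
        = -((x 1) ^ 3 - M * A ^ 2) / ((x 1) ^ 4 + (x 1) ^ 2 * A ^ 2 + 2 * M * x 1 * A ^ 2)
      rw [hd1, hval]
      have h3 : (x 1) ^ 3 + x 1 * A ^ 2 + 2 * M * A ^ 2 ≠ 0 := by
        intro h
        apply hden
        have hfac : (x 1) ^ 4 + (x 1) ^ 2 * A ^ 2 + 2 * M * x 1 * A ^ 2
            = x 1 * ((x 1) ^ 3 + x 1 * A ^ 2 + 2 * M * A ^ 2) := by ring
        rw [hfac, h, mul_zero]
      have hneg3 : -((x 1) ^ 3 + x 1 * A ^ 2 + 2 * M * A ^ 2) ≠ 0 := neg_ne_zero.mpr h3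
      have key : -((x 1) ^ 2 + A ^ 2 + 2 * M * A ^ 2 / x 1)
          = -((x 1) ^ 3 + x 1 * A ^ 2 + 2 * M * A ^ 2) / x 1 := by
        field_simp [hr1]
      have hE : -(x 1 ^ 2 * M * A ^ 2 * 4) + (-(x 1 ^ 3 * A ^ 2 * 2) - x 1 ^ 5 * 2) ≠ 0 := by
        have hfac2 : -(x 1 ^ 2 * M * A ^ 2 * 4) + (-(x 1 ^ 3 * A ^ 2 * 2) - x 1 ^ 5 * 2)
            = (-2 * x 1 ^ 2) * ((x 1) ^ 3 + x 1 * A ^ 2 + 2 * M * A ^ 2) := by ring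
        rw [hfac2]
        exact mul_ne_zero (mul_ne_zero (by norm_num) (pow_ne_zero 2 hr1)) h3
      have hEE : (-(x 1 ^ 2 * M * A ^ 2 * 4) + (-(x 1 ^ 3 * A ^ 2 * 2) - x 1 ^ 5 * 2))
          * (-(x 1 ^ 2 * M * A ^ 2 * 4) + (-(x 1 ^ 3 * A ^ 2 * 2) - x 1 ^ 5 * 2))⁻¹ = 1 :=
        mul_inv_cancel₀ hE
      rw [key, inv_div, eq_div_iff hden]
      rw [show (x 1) ^ 4 + (x 1) ^ 2 * A ^ 2 + 2 * M * x 1 * A ^ 2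
          = x 1 * ((x 1) ^ 3 + x 1 * A ^ 2 + 2 * M * A ^ 2) by ring]
      have hPt : x 1 / -((x 1) ^ 3 + x 1 * A ^ 2 + 2 * M * A ^ 2)
          * ((x 1) ^ 3 + x 1 * A ^ 2 + 2 * M * A ^ 2) = -x 1 := by
        rw [div_neg, neg_mul, div_mul_cancel₀ _ h3]
      have hQ : 2 * M * A ^ 2 / x 1 ^ 2 * x 1 ^ 2 = 2 * M * A ^ 2 :=
        div_mul_cancel₀ _ (pow_ne_zero 2 hr1)
      linear_combination (1 / 2) * (2 * x 1 - 2 * M * A ^ 2 / x 1 ^ 2) * x 1 * hPt + (1 / 2) * hQ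
    · show -(1 / 2) * (gKerr M A x 3 3)⁻¹ * D33 (Pi.single 2 1) = (0 : ℝ)
      rw [hd2]
      simp
    · show -(1 / 2) * (gKerr M A x 3 3)⁻¹ * D33 (Pi.single 3 1) = (0 : ℝ)
      rw [hD33_3]
      simp
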